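/- The vector field F₈(x,y,z) = (−yz, xz, xz) on ℝ³ admits the positive-definite quadratic first integral I(x,y,z) = x² + y² + (y−z)²; hence all integral curves are bounded and F₈ is complete. -/

import Mathlib

/-- The geodesic field `F₈` of `Q₈` on `aff(ℝ) ⊕ ℝ` (`λ = 0`): `(−yz, xz, xz)`. -/
def F8aff (v : Fin 3 → ℝ) : Fin 3 → ℝ := ![-(v 1 * v 2), v 0 * v 2, v 0 * v 2]

open NormedSpace

attribute [local instance] Matrix.linftyOpNormedRing Matrix.linftyOpNormedAlgebra
  Matrix.linftyOpNormedAddCommGroup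

noncomputable def entryL (p₀ : Fin 2 → ℝ) (i : Fin 2) : Matrix (Fin 2) (Fin 2) ℝ →L[ℝ] ℝ :=
  LinearMap.toContinuousLinearMap
  { toFun := fun N => N.mulVec p₀ i
    map_add' := fun A B => by simp [Matrix.add_mulVec]
    map_smul' := fun s A => by simp [Matrix.smul_mulVec] }

/-- Key construction: global bounded solution of `F8aff` with prescribed initial data. -/
theorem key (v : Fin 3 → ℝ) (r : ℝ) (hr : 0 < r) (p₀ : Fin 2 → ℝ)
    (hp : (p₀ 0)^2 + (p₀ 1)^2 ≠ 0)
    (hx0 : r * ((p₀ 0)^2 - (p₀ 1)^2) = v 0 * ((p₀ 0)^2 + (p₀ 1)^2))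
    (hy0 : 2*r*(p₀ 0)*(p₀ 1) = v 1 * ((p₀ 0)^2 + (p₀ 1)^2)) :
    ∃ γ : ℝ → Fin 3 → ℝ, γ 0 = v ∧
      (∀ t, HasDerivAt γ (F8aff (γ t)) t) ∧ ∃ C, ∀ t, ‖γ t‖ ≤ C := by
  set c : ℝ := v 1 - v 2 with hc
  set M : Matrix (Fin 2) (Fin 2) ℝ := !![0, c/2; -(c/2), r] with hM
  set p : ℝ → Fin 2 → ℝ := fun t => (exp (t • M)).mulVec p₀ with hpdef
  -- derivatives of the linear flow components
  have hder : ∀ (i : Fin 2) (t : ℝ),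
      HasDerivAt (fun u => p u i) ((M.mulVec (p t)) i) t := by
    intro i t
    have h := hasDerivAt_exp_smul_const' (𝕂 := ℝ) M t
    have h2 := (entryL p₀ i).hasFDerivAt.comp_hasDerivAt t h
    replace h2 : HasDerivAt (fun u => p u i) ((M * exp (t • M)).mulVec p₀ i) t := h2
    simpa only [hpdef, Matrix.mulVec_mulVec] using h2
  have ha : ∀ t, HasDerivAt (fun u => p u 0) (c/2 * p t 1) t := by
    intro t
    have := hder 0 t
    simpa [hM, Matrix.mulVec, dotProduct, Fin.sum_univ_two] using this
  have hb : ∀ t, HasDerivAt (fun u => p u 1) (-(c/2) * p t 0 + r * p t 1) t := by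
    intro t
    have := hder 1 t
    simpa [hM, Matrix.mulVec, dotProduct, Fin.sum_univ_two] using this
  -- positivity of the denominator
  have hpos : ∀ t, 0 < (p t 0)^2 + (p t 1)^2 := by
    intro t
    rcases lt_or_eq_of_le (by positivity : (0:ℝ) ≤ (p t 0)^2 + (p t 1)^2) with h | h
    · exact h
    exfalso
    have h0 : p t 0 = 0 := by nlinarith [sq_nonneg (p t 0), sq_nonneg (p t 1)]
    have h1 : p t 1 = 0 := by nlinarith [sq_nonneg (p t 0), sq_nonneg (p t 1)]
    have hzero : p t = 0 := by
      funext i; fin_cases i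
      · exact h0
      · exact h1
    have keyinv : exp ((-t) • M) * exp (t • M) = 1 := by
      refine (exp_add_of_commute (((Commute.refl M).smul_left (-t)).smul_right t)).symm.trans ?_
      simp
    have hback : (exp ((-t) • M)).mulVec (p t) = p₀ := by
      rw [hpdef]
      simp only
      rw [Matrix.mulVec_mulVec, keyinv, Matrix.one_mulVec]
    rw [hzero, Matrix.mulVec_zero] at hback
    apply hp
    rw [← hback]
    simp
  have hp0 : p 0 = p₀ := by
    rw [hpdef]; simp [exp_zero, Matrix.one_mulVec]
  -- the solution
  set X : ℝ → ℝ := fun t => r * ((p t 0)^2 - (p t 1)^2) / ((p t 0)^2 + (p t 1)^2) with hX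
  set Y : ℝ → ℝ := fun t => 2*r*(p t 0)*(p t 1) / ((p t 0)^2 + (p t 1)^2) with hY
  set γ : ℝ → Fin 3 → ℝ := fun t => ![X t, Y t, Y t - c] with hγ
  have hXd : ∀ t, HasDerivAt X (-(Y t * (Y t - c))) t := by
    intro t
    have h1 := (((ha t).pow 2).sub ((hb t).pow 2)).const_mul r
    have h2 := ((ha t).pow 2).add ((hb t).pow 2)
    have h3 := h1.div h2 (hpos t).ne'
    refine h3.congr_deriv ?_
    have hD := (hpos t).ne'
    rw [hY]
    simp only [Pi.add_apply, Pi.sub_apply, Pi.pow_apply]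
    field_simp
    ring
  have hYd : ∀ t, HasDerivAt Y (X t * (Y t - c)) t := by
    intro t
    have h1 := (((ha t).const_mul (2*r)).mul (hb t))
    have h2 := ((ha t).pow 2).add ((hb t).pow 2)
    have h3 := h1.div h2 (hpos t).ne'
    have h1' : HasDerivAt (fun u => 2*r*(p u 0)*(p u 1))
        ((2*r) * (c/2 * p t 1) * p t 1 + (2*r) * (p t 0) * (-(c/2) * p t 0 + r * p t 1)) t := by
      have := (((ha t).const_mul (2*r)).mul (hb t))
      refine this.congr_deriv ?_
      ring
    have h3' := h1'.div h2 (hpos t).ne'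
    refine h3'.congr_deriv ?_
    have hD := (hpos t).ne'
    rw [hX, hY]
    simp only [Pi.add_apply, Pi.sub_apply, Pi.pow_apply]
    field_simp
    ring
  refine ⟨γ, ?_, ?_, r + |c|, ?_⟩
  · -- initial condition
    have hD0 : ((p₀ 0)^2 + (p₀ 1)^2) ≠ 0 := hp
    funext i; fin_cases i
    · show X 0 = v 0
      rw [hX]; simp only [hp0]
      rw [div_eq_iff hD0]; linarith [hx0]
    · show Y 0 = v 1
      rw [hY]; simp only [hp0]
      rw [div_eq_iff hD0]; linarith [hy0]
    · show Y 0 - c = v 2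
      have : Y 0 = v 1 := by
        rw [hY]; simp only [hp0]; rw [div_eq_iff hD0]; linarith [hy0]
      rw [this, hc]; ring
  · -- the ODE
    intro t
    have hF : F8aff (γ t) = ![-(Y t * (Y t - c)), X t * (Y t - c), X t * (Y t - c)] := by
      funext i; fin_cases i <;> simp [F8aff, hγ]
    rw [hF]
    apply hasDerivAt_pi.2
    intro i; fin_cases i
    · simpa [hγ] using hXd t
    · simpa [hγ] using hYd t
    · simpa [hγ] using (hYd t).sub_const c
  · -- boundedness
    intro t
    have hD := hpos t
    have hXb : |X t| ≤ r := by
      rw [hX, abs_div, abs_of_pos hD, div_le_iff₀ hD]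
      have : |r * ((p t 0)^2 - (p t 1)^2)| ≤ r * ((p t 0)^2 + (p t 1)^2) :=
        abs_le.2 ⟨by nlinarith, by nlinarith⟩
      linarith [this]
    have hYb : |Y t| ≤ r := by
      rw [hY, abs_div, abs_of_pos hD, div_le_iff₀ hD]
      have : |2*r*(p t 0)*(p t 1)| ≤ r * ((p t 0)^2 + (p t 1)^2) :=
        abs_le.2 ⟨by nlinarith [sq_nonneg (p t 0 + p t 1)], by nlinarith [sq_nonneg (p t 0 - p t 1)]⟩
      linarith [this]
    have hYc : |Y t - c| ≤ r + |c| :=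
      le_trans (abs_sub _ _) (by linarith [hYb])
    have habs := abs_nonneg c
    rw [pi_norm_le_iff_of_nonneg (by positivity)]
    intro i
    have : γ t i = ![X t, Y t, Y t - c] i := by rw [hγ]
    rw [this, Real.norm_eq_abs]
    fin_cases i
    · simpa using (by linarith [hXb] : |X t| ≤ r + |c|)
    · simpa using (by linarith [hYb] : |Y t| ≤ r + |c|)
    · simpa using hYc

/-- `I = x² + y² + (y−z)²` is a positive-definite quadratic first integral of
`F₈`; hence all integral curves are bounded and `F₈` is complete. -/
theorem stmt_7 :
    (∀ (γ : ℝ → Fin 3 → ℝ) (t : ℝ), HasDerivAt γ (F8aff (γ t)) t →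
        HasDerivAt (fun u => (γ u 0) ^ 2 + (γ u 1) ^ 2 + (γ u 1 - γ u 2) ^ 2) 0 t) ∧
    (∀ v : Fin 3 → ℝ, v ≠ 0 → 0 < (v 0) ^ 2 + (v 1) ^ 2 + (v 1 - v 2) ^ 2) ∧
    (∀ v : Fin 3 → ℝ, ∃ γ : ℝ → Fin 3 → ℝ, γ 0 = v ∧
        (∀ t, HasDerivAt γ (F8aff (γ t)) t) ∧ ∃ C, ∀ t, ‖γ t‖ ≤ C) := by
  refine ⟨?_, ?_, ?_⟩
  · intro γ t h
    have h0 : HasDerivAt (fun u => γ u 0) (-(γ t 1 * γ t 2)) t := by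
      have := hasDerivAt_pi.1 h 0
      simpa [F8aff] using this
    have h1 : HasDerivAt (fun u => γ u 1) (γ t 0 * γ t 2) t := by
      have := hasDerivAt_pi.1 h 1
      simpa [F8aff] using this
    have h2 : HasDerivAt (fun u => γ u 2) (γ t 0 * γ t 2) t := by
      have := hasDerivAt_pi.1 h 2
      simpa [F8aff] using this
    have := ((h0.pow 2).add (h1.pow 2)).add ((h1.sub h2).pow 2)
    refine this.congr_deriv ?_
    ring
  · intro v hv
    rcases lt_or_eq_of_le (by positivity : (0:ℝ) ≤ (v 0)^2 + (v 1)^2 + (v 1 - v 2)^2) with h | h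
    · exact h
    exfalso
    apply hv
    have e0 : v 0 = 0 := by nlinarith [sq_nonneg (v 0), sq_nonneg (v 1), sq_nonneg (v 1 - v 2)]
    have e1 : v 1 = 0 := by nlinarith [sq_nonneg (v 0), sq_nonneg (v 1), sq_nonneg (v 1 - v 2)]
    have e2 : v 1 - v 2 = 0 := by
      nlinarith [sq_nonneg (v 0), sq_nonneg (v 1), sq_nonneg (v 1 - v 2)]
    funext i; fin_cases i
    · exact e0
    · exact e1
    · show v 2 = 0; linarith
  · intro v
    by_cases h0 : v 0 = 0 ∧ v 1 = 0
    · refine ⟨fun _ => v, rfl, ?_, ‖v‖, fun _ => le_refl _⟩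
      intro t
      have hF : F8aff v = 0 := by
        funext i; fin_cases i <;> simp [F8aff, h0.1, h0.2]
      simpa [hF] using hasDerivAt_const t v
    · set r : ℝ := Real.sqrt ((v 0)^2 + (v 1)^2) with hrdef
      have hsum : 0 < (v 0)^2 + (v 1)^2 := by
        rcases not_and_or.1 h0 with h | h
        · positivity
        · positivity
      have hr : 0 < r := Real.sqrt_pos.2 hsum
      have hr2 : r^2 = (v 0)^2 + (v 1)^2 := Real.sq_sqrt hsum.le
      by_cases hx : r + v 0 = 0
      · -- v 0 = -r, v 1 = 0
        have hv1 : v 1 = 0 := by nlinarith [hr2]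
        refine key v r hr ![v 1, r - v 0] ?_ ?_ ?_
        · simp only [Matrix.cons_val_zero, Matrix.cons_val_one, Matrix.head_cons]
          nlinarith [hr]
        · simp only [Matrix.cons_val_zero, Matrix.cons_val_one, Matrix.head_cons]
          nlinarith [hr2]
        · simp only [Matrix.cons_val_zero, Matrix.cons_val_one, Matrix.head_cons]
          nlinarith [hr2]
      · refine key v r hr ![r + v 0, v 1] ?_ ?_ ?_
        · simp only [Matrix.cons_val_zero, Matrix.cons_val_one, Matrix.head_cons]
          have h1 : (r + v 0)^2 + (v 1)^2 = 2*r*(r + v 0) := by linear_combination -hr2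
          have h2 : 0 ≤ r + v 0 := by nlinarith [hr2, sq_nonneg (v 1)]
          have h3 : 0 < r + v 0 := lt_of_le_of_ne h2 (Ne.symm hx)
          rw [h1]
          positivity
        · simp only [Matrix.cons_val_zero, Matrix.cons_val_one, Matrix.head_cons]
          linear_combination (v 0 + r) * hr2
        · simp only [Matrix.cons_val_zero, Matrix.cons_val_one, Matrix.head_cons]
          linear_combination v 1 * hr2
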